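/- For every q ∈ ℂ with |q| < 1/2, one has the closed-form integral evaluation ∫₀¹ log(1 + 2 Re(q e^{2πit})) dt = log((1 + sqrt(1 − 4|q|²))/2). -/

import Mathlib

open MeasureTheory Complex Filter ComplexConjugate

/-- The point `e^{2πit}` on the unit circle. -/
noncomputable def circlePt (t : ℝ) : ℂ := Complex.exp (((2 * Real.pi * t : ℝ) : ℂ) * Complex.I)

/-- The inverse Szegő function `ψ(z) = exp(-(1/2)∫₀¹ ((e^{2πit}+z)/(e^{2πit}-z)) log φ(t) dt)`. -/
noncomputable def szegoPsi (φ : ℝ → ℝ) (z : ℂ) : ℂ :=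
  Complex.exp (-(1/2 : ℂ) * ∫ t in (0:ℝ)..1,
    ((circlePt t + z) / (circlePt t - z)) * (Real.log (φ t) : ℂ))

/-- Fourier coefficients of the weight: `γ(k) = ∫₀¹ e^{2πikt} φ(t) dt`. -/
noncomputable def toeplitzCoeff (φ : ℝ → ℝ) (k : ℤ) : ℂ :=
  ∫ t in (0:ℝ)..1, Complex.exp (((2 * Real.pi * (k : ℝ) * t : ℝ) : ℂ) * Complex.I) * (φ t : ℂ)

lemma circlePt_norm (t : ℝ) : ‖circlePt t‖ = 1 := by
  simpa [circlePt] using Complex.norm_exp_ofReal_mul_I (2 * Real.pi * t)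

lemma re_pos_of_lt_one {a z : ℂ} (ha : ‖a‖ < 1) (hz : ‖z‖ ≤ 1) : 0 < (1 + a * z).re := by
  have h1 : |(a * z).re| ≤ ‖a * z‖ := Complex.abs_re_le_norm _
  have h2 : ‖a * z‖ ≤ ‖a‖ := by
    rw [norm_mul]
    nlinarith [norm_nonneg a, norm_nonneg z]
  have := abs_le.1 (h1.trans h2)
  simp only [Complex.add_re, Complex.one_re, Complex.mul_re]
  simp only [Complex.mul_re] at this
  linarith [this.1]

lemma integral_clog (a : ℂ) (ha : ‖a‖ < 1) :
    ∫ t in (0:ℝ)..1, Complex.log (1 + a * circlePt t) = 0 := by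
  set f : ℂ → ℂ := fun z => Complex.log (1 + a * z) with hf
  have hmem : ∀ z : ℂ, ‖z‖ ≤ 1 → (1 + a * z) ∈ Complex.slitPlane := fun z hz =>
    Or.inl (re_pos_of_lt_one ha hz)
  have hca : ∀ z : ℂ, ‖z‖ ≤ 1 → ContinuousAt f z := by
    intro z hz
    have : Continuous fun w : ℂ => 1 + a * w := by continuity
    exact ContinuousAt.comp (g := Complex.log) (f := fun w : ℂ => 1 + a * w) (x := z)
      (continuousAt_clog (hmem z hz)) this.continuousAt
  have hcont : ContinuousOn f (Metric.closedBall 0 1) := fun z hz =>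
    (hca z (by simpa using Metric.mem_closedBall.1 hz)).continuousWithinAt
  have hdiff : ∀ z ∈ Metric.ball (0:ℂ) 1 \ (∅ : Set ℂ), DifferentiableAt ℂ f z := by
    intro z hz
    have hz1 : ‖z‖ ≤ 1 := le_of_lt (by simpa using Metric.mem_ball.1 hz.1)
    have hd2 : DifferentiableAt ℂ (fun w : ℂ => 1 + a * w) z := by fun_prop
    exact (Complex.differentiableAt_log (hmem z hz1)).comp z hd2
  have key := Complex.circleIntegral_sub_center_inv_smul_of_differentiable_on_off_countable
    one_pos Set.countable_empty hcont hdiff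
  have hf0 : f 0 = 0 := by simp [hf]
  rw [hf0, smul_zero] at key
  have hcirc : (∮ z in C(0, 1), (z - 0)⁻¹ • f z) = 0 := key
  rw [circleIntegral] at hcirc
  have heq : ∀ θ : ℝ, deriv (circleMap 0 1) θ • ((circleMap 0 1 θ - 0)⁻¹ • f (circleMap 0 1 θ))
      = Complex.I * f (circleMap 0 1 θ) := by
    intro θ
    have hne : circleMap 0 1 θ ≠ 0 := circleMap_ne_center one_ne_zero
    rw [deriv_circleMap]
    simp only [smul_eq_mul, sub_zero]
    have : circleMap 0 1 θ = circleMap 0 1 θ := rfl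
    field_simp [hne]
  simp only [heq] at hcirc
  rw [intervalIntegral.integral_const_mul, mul_eq_zero] at hcirc
  have hθ : ∫ θ in (0:ℝ)..(2*Real.pi), f (circleMap 0 1 θ) = 0 :=
    hcirc.resolve_left Complex.I_ne_zero
  have hcm : ∀ t : ℝ, circleMap 0 1 (2 * Real.pi * t) = circlePt t := by
    intro t
    simp only [circleMap, circlePt, zero_add, one_mul]
    norm_cast
    rw [one_mul]
  have := intervalIntegral.smul_integral_comp_mul_left
    (fun θ => f (circleMap 0 1 θ)) (2 * Real.pi) (a := 0) (b := 1)
  rw [mul_zero, mul_one, hθ, smul_eq_zero] at this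
  have h2 : (2 * Real.pi : ℝ) ≠ 0 := by positivity
  have hz := this.resolve_left h2
  calc ∫ t in (0:ℝ)..1, Complex.log (1 + a * circlePt t)
      = ∫ t in (0:ℝ)..1, f (circleMap 0 1 (2 * Real.pi * t)) := by
        refine intervalIntegral.integral_congr fun t _ => ?_
        rw [hcm]
    _ = 0 := hz

lemma circlePt_continuous : Continuous circlePt := by
  unfold circlePt
  exact Complex.continuous_exp.comp (by continuity)

lemma clog_cont (a : ℂ) (ha : ‖a‖ < 1) :
    Continuous fun t : ℝ => Complex.log (1 + a * circlePt t) := by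
  refine continuous_iff_continuousAt.2 fun t => ?_
  have hmem : (1 + a * circlePt t) ∈ Complex.slitPlane :=
    Or.inl (re_pos_of_lt_one ha (circlePt_norm t).le)
  exact ContinuousAt.comp (g := Complex.log) (f := fun u : ℝ => 1 + a * circlePt u) (x := t)
    (continuousAt_clog hmem)
    ((continuous_const.add (continuous_const.mul circlePt_continuous)).continuousAt)

lemma integral_rlog (a : ℂ) (ha : ‖a‖ < 1) :
    ∫ t in (0:ℝ)..1, Real.log ‖1 + a * circlePt t‖ = 0 := by
  have hInt : IntervalIntegrable (fun t => Complex.log (1 + a * circlePt t))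
      MeasureTheory.volume 0 1 := (clog_cont a ha).intervalIntegrable 0 1
  have h1 : ∫ t in (0:ℝ)..1, Real.log ‖1 + a * circlePt t‖
      = ∫ t in (0:ℝ)..1, (Complex.log (1 + a * circlePt t)).re := by
    refine intervalIntegral.integral_congr fun t _ => ?_
    rw [Complex.log_re]
  rw [h1, intervalIntegral.integral_of_le zero_le_one]
  have h2 := integral_re (𝕜 := ℂ) (μ := MeasureTheory.volume.restrict (Set.Ioc (0:ℝ) 1))
    (f := fun t => Complex.log (1 + a * circlePt t)) hInt.1
  simp only [RCLike.re_to_complex] at h2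
  rw [h2, ← intervalIntegral.integral_of_le zero_le_one, integral_clog a ha]
  rfl

/-- for |q| < 1/2,
`∫₀¹ log(1 + 2 Re(q e^{2πit})) dt = log((1 + sqrt(1 − 4|q|²))/2)`. -/
theorem log_integral_tridiagonal (q : ℂ) (hq : ‖q‖ < 1/2) :
    ∫ t in (0:ℝ)..1, Real.log (1 + 2 * (q * circlePt t).re) =
      Real.log ((1 + Real.sqrt (1 - 4 * ‖q‖ ^ 2)) / 2) := by
  have hq0 : 0 ≤ ‖q‖ := norm_nonneg q
  set s := Real.sqrt (1 - 4 * ‖q‖ ^ 2) with hs_def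
  have hs0 : 0 ≤ s := Real.sqrt_nonneg _
  have hssq : s ^ 2 = 1 - 4 * ‖q‖ ^ 2 := Real.sq_sqrt (by nlinarith)
  have hs1 : (0:ℝ) < 1 + s := by linarith
  set a : ℂ := ((2 / (1 + s) : ℝ) : ℂ) * q with ha_def
  clear_value s
  clear_value a
  have hna : ‖a‖ = 2 * ‖q‖ / (1 + s) := by
    rw [ha_def, norm_mul, Complex.norm_real, Real.norm_eq_abs, abs_of_pos (by positivity)]
    ring
  have ha1 : ‖a‖ < 1 := by
    rw [hna, div_lt_one hs1]; linarith
  have hasq : ‖a‖ ^ 2 = (1 - s) / (1 + s) := by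
    rw [hna, div_pow, div_eq_div_iff (by positivity) (by positivity)]
    linear_combination (1 + s) * hssq
  -- pointwise identity
  have hpt : ∀ t : ℝ, Real.log (1 + 2 * (q * circlePt t).re)
      = 2 * Real.log ‖1 + a * circlePt t‖ + Real.log ((1 + s) / 2) := by
    intro t
    set w := circlePt t with hw_def
    have hw : ‖w‖ = 1 := circlePt_norm t
    have hw2 : w * (starRingEnd ℂ) w = 1 := by
      rw [Complex.mul_conj, Complex.normSq_eq_norm_sq, hw]; norm_num
    have ha2 : a * (starRingEnd ℂ) a = ((‖a‖ ^ 2 : ℝ) : ℂ) := by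
      rw [Complex.mul_conj, Complex.normSq_eq_norm_sq]
    have expand : (1 + a * w) * (starRingEnd ℂ) (1 + a * w)
        = 1 + ((‖a‖ ^ 2 : ℝ) : ℂ) + (a * w + (starRingEnd ℂ) (a * w)) := by
      calc (1 + a * w) * (starRingEnd ℂ) (1 + a * w)
          = 1 + (a * (starRingEnd ℂ) a) * (w * (starRingEnd ℂ) w)
            + (a * w + (starRingEnd ℂ) a * (starRingEnd ℂ) w) := by
            rw [map_add, map_one, map_mul]; ring
        _ = 1 + ((‖a‖ ^ 2 : ℝ) : ℂ) + (a * w + (starRingEnd ℂ) (a * w)) := by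
            rw [hw2, ha2, mul_one, ← map_mul]
    have hsq : ‖1 + a * w‖ ^ 2 = 1 + ‖a‖ ^ 2 + 2 * (a * w).re := by
      have h1 : (((‖1 + a * w‖ ^ 2 : ℝ)) : ℂ) = (1 + a * w) * (starRingEnd ℂ) (1 + a * w) := by
        rw [Complex.mul_conj, Complex.normSq_eq_norm_sq]
      have h2 := congrArg Complex.re (h1.trans expand)
      simp only [Complex.add_conj, Complex.add_re, Complex.one_re, Complex.ofReal_re] at h2
      linarith [h2]
    have haw_re : (a * w).re = 2 / (1 + s) * (q * w).re := by
      rw [ha_def, mul_assoc, Complex.re_ofReal_mul]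
    have hiden : 1 + 2 * (q * w).re = ‖1 + a * w‖ ^ 2 * ((1 + s) / 2) := by
      rw [hsq, haw_re, hasq]
      field_simp
      ring
    have hpos1 : 0 < ‖1 + a * w‖ := by
      have := re_pos_of_lt_one ha1 (le_of_eq (circlePt_norm t))
      rw [← hw_def] at this
      have hne : (1 + a * w) ≠ 0 := fun h => by simp [h] at this
      exact norm_pos_iff.2 hne
    rw [hiden, Real.log_mul (by positivity) (by positivity), Real.log_pow]
    push_cast
    ring
  rw [intervalIntegral.integral_congr (fun t _ => hpt t)]
  have hcont : Continuous fun t : ℝ => Real.log ‖1 + a * circlePt t‖ := by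
    refine continuous_iff_continuousAt.2 fun t => ?_
    have hpos : (1 + a * circlePt t).re > 0 := re_pos_of_lt_one ha1 (circlePt_norm t).le
    have hne : ‖1 + a * circlePt t‖ ≠ 0 := by
      refine ne_of_gt (norm_pos_iff.2 fun h => ?_)
      simp [h] at hpos
    exact ContinuousAt.comp (g := Real.log) (Real.continuousAt_log hne)
      ((continuous_const.add (continuous_const.mul circlePt_continuous)).norm.continuousAt)
  have hi1 : IntervalIntegrable (fun t : ℝ => 2 * Real.log ‖1 + a * circlePt t‖)
      MeasureTheory.volume 0 1 := (continuous_const.mul hcont).intervalIntegrable 0 1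
  have hi2 : IntervalIntegrable (fun _ : ℝ => Real.log ((1 + s) / 2))
      MeasureTheory.volume 0 1 := intervalIntegrable_const
  rw [intervalIntegral.integral_add hi1 hi2, intervalIntegral.integral_const_mul,
    integral_rlog a ha1, intervalIntegral.integral_const]
  simp
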